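/- Let n ≥ 5 and let λ₁,…,λ_n and λ̄₁,…,λ̄_n be real numbers satisfying, for all i ≠ j: λ_i λ_j + (1/(n−2))(λ_i² + λ_j²) = λ̄_i λ̄_j + (1/(n−2))(λ̄_i² + λ̄_j²). Suppose further that Σ_i λ_i = Σ_i λ̄_i = 0, Σ_i λ_i² = Σ_i λ̄_i² = (n−1)/n, and that no value among λ₁,…,λ_n occurs with multiplicity ≥ n−2. Then λ̄_i = λ_i for all i, or λ̄_i = −λ_i for all i. -/
import Mathlib

open BigOperators

lemma exOut {n : ℕ} (s : Finset (Fin n)) (h : s.card < n) : ∃ m : Fin n, m ∉ s := by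
  by_contra h'
  push_neg at h'
  have hu : s = Finset.univ := Finset.eq_univ_iff_forall.mpr h'
  rw [hu, Finset.card_univ, Fintype.card_fin] at h
  exact lt_irrefl _ h

lemma bigFiber {n : ℕ} (hn : 5 ≤ n) (l : Fin n → ℝ)
    (hmult : ∀ i : Fin n, Set.ncard {j : Fin n | l j = l i} < n - 2)
    (p q : Fin n) (C : ℝ) (h : ∀ m : Fin n, m ≠ p → m ≠ q → l m = C) : False := by
  classical
  set S : Finset (Fin n) := Finset.univ.filter (fun j => l j = C) with hS
  have hsub : Sᶜ ⊆ {p, q} := by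
    intro m hm
    simp only [hS, Finset.mem_compl, Finset.mem_filter, Finset.mem_univ, true_and] at hm
    simp only [Finset.mem_insert, Finset.mem_singleton]
    by_contra hc
    push_neg at hc
    exact hm (h m hc.1 hc.2)
  have h2 : Sᶜ.card ≤ 2 := (Finset.card_le_card hsub).trans (by
    apply (Finset.card_insert_le _ _).trans; simp)
  have h3 : S.card + Sᶜ.card = n := by
    rw [Finset.card_add_card_compl, Fintype.card_fin]
  have hne : S.Nonempty := Finset.card_pos.mp (by omega)
  obtain ⟨m0, hm0⟩ := hne
  have hm0' : l m0 = C := by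
    simp only [hS, Finset.mem_filter] at hm0
    exact hm0.2
  have hmm := hmult m0
  have hset : {j : Fin n | l j = l m0} = (S : Set (Fin n)) := by
    ext j; simp [hS, hm0']
  rw [hset, Set.ncard_coe_finset] at hmm
  omega

lemma transfer {n : ℕ} (hn : 5 ≤ n) (l lb : Fin n → ℝ)
    (heq : ∀ i j : Fin n, i ≠ j →
      l i * l j + (1 / ((n : ℝ) - 2)) * ((l i) ^ 2 + (l j) ^ 2)
        = lb i * lb j + (1 / ((n : ℝ) - 2)) * ((lb i) ^ 2 + (lb j) ^ 2))
    (hmult : ∀ i : Fin n, Set.ncard {j : Fin n | l j = l i} < n - 2) :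
    ∀ i j : Fin n, i ≠ j → lb i = lb j → l i = l j := by
  intro i j hij hlb
  by_contra hne
  apply bigFiber hn l hmult i j (-(1/((n:ℝ)-2)) * (l i + l j))
  intro m hmi hmj
  have h1 := heq m i hmi
  have h2 := heq m j hmj
  rw [hlb] at h1
  have key : (l i - l j) * (l m + (1/((n:ℝ)-2)) * (l i + l j)) = 0 := by
    linear_combination h1 - h2
  rcases mul_eq_zero.mp key with h | h
  · exact absurd (by linarith : l i = l j) hne
  · linarith

lemma affineLem {n : ℕ} (hn : 5 ≤ n) (l lb : Fin n → ℝ)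
    (heq : ∀ i j : Fin n, i ≠ j →
      l i * l j + (1 / ((n : ℝ) - 2)) * ((l i) ^ 2 + (l j) ^ 2)
        = lb i * lb j + (1 / ((n : ℝ) - 2)) * ((lb i) ^ 2 + (lb j) ^ 2))
    (hmult : ∀ i : Fin n, Set.ncard {j : Fin n | l j = l i} < n - 2)
    (p q : Fin n) (hpq : p ≠ q) (hlpq : l p ≠ l q) :
    ∃ a b : ℝ, a ≠ 0 ∧ ∀ m : Fin n, m ≠ p → m ≠ q → lb m = a * l m + b := by
  have hbne : lb p ≠ lb q := fun h => hlpq (transfer hn l lb heq hmult p q hpq h)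
  have hD : lb p - lb q ≠ 0 := sub_ne_zero.mpr hbne
  refine ⟨(l p - l q) / (lb p - lb q),
    ((1/((n:ℝ)-2)) * ((l p)^2 - (l q)^2) - (1/((n:ℝ)-2)) * ((lb p)^2 - (lb q)^2)) / (lb p - lb q),
    div_ne_zero (sub_ne_zero.mpr hlpq) hD, ?_⟩
  intro m hmp hmq
  have h1 := heq m p hmp
  have h2 := heq m q hmq
  field_simp
  linear_combination h2 - h1

lemma Zlem {n : ℕ} (hn : 5 ≤ n) (l lb : Fin n → ℝ)
    (heq : ∀ i j : Fin n, i ≠ j →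
      l i * l j + (1 / ((n : ℝ) - 2)) * ((l i) ^ 2 + (l j) ^ 2)
        = lb i * lb j + (1 / ((n : ℝ) - 2)) * ((lb i) ^ 2 + (lb j) ^ 2))
    (a b : ℝ) (p q : Fin n)
    (haff : ∀ m : Fin n, m ≠ p → m ≠ q → lb m = a * l m + b)
    (u v w : Fin n) (hup : u ≠ p) (huq : u ≠ q) (hvp : v ≠ p) (hvq : v ≠ q)
    (hwp : w ≠ p) (hwq : w ≠ q) (hwu : w ≠ u) (hwv : w ≠ v) (hluv : l u ≠ l v) :
    (a^2 - 1) * (l w + (1/((n:ℝ)-2)) * (l u + l v)) + a*b*(1 + 2*(1/((n:ℝ)-2))) = 0 := by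
  have h1 := heq u w (Ne.symm hwu)
  have h2 := heq v w (Ne.symm hwv)
  rw [haff u hup huq, haff w hwp hwq] at h1
  rw [haff v hvp hvq, haff w hwp hwq] at h2
  have key : (l u - l v) * ((a^2 - 1) * (l w + (1/((n:ℝ)-2)) * (l u + l v))
      + a*b*(1 + 2*(1/((n:ℝ)-2)))) = 0 := by
    linear_combination h2 - h1
  rcases mul_eq_zero.mp key with h | h
  · exact absurd (by linarith : l u = l v) hluv
  · exact h

lemma extendLem {n : ℕ} (hn : 5 ≤ n) (l lb : Fin n → ℝ)
    (heq : ∀ i j : Fin n, i ≠ j →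
      l i * l j + (1 / ((n : ℝ) - 2)) * ((l i) ^ 2 + (l j) ^ 2)
        = lb i * lb j + (1 / ((n : ℝ) - 2)) * ((lb i) ^ 2 + (lb j) ^ 2))
    (hs : ∑ i, l i = 0) (hbs : ∑ i, lb i = 0)
    (hn2 : ∑ i, (l i) ^ 2 = ((n : ℝ) - 1) / n)
    (hbn2 : ∑ i, (lb i) ^ 2 = ((n : ℝ) - 1) / n)
    (hmult : ∀ i : Fin n, Set.ncard {j : Fin n | l j = l i} < n - 2)
    (p q : Fin n) (hpq : p ≠ q) (hlpq : l p ≠ l q)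
    (ε : ℝ) (hε : ε = 1 ∨ ε = -1)
    (haff : ∀ m : Fin n, m ≠ p → m ≠ q → lb m = ε * l m) :
    (∀ i, lb i = l i) ∨ (∀ i, lb i = - l i) := by
  classical
  have hε2 : ε ^ 2 = 1 := by rcases hε with h | h <;> rw [h] <;> norm_num
  have hmem : ∀ m : Fin n, m ∈ (({p, q} : Finset (Fin n))ᶜ) → m ≠ p ∧ m ≠ q := by
    intro m hm
    simp only [Finset.mem_compl, Finset.mem_insert, Finset.mem_singleton] at hm
    push_neg at hm
    exact hm
  -- sums
  have A1 : lb p + lb q + ∑ m ∈ (({p, q} : Finset (Fin n))ᶜ), lb m = 0 := by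
    have h := Finset.sum_add_sum_compl ({p, q} : Finset (Fin n)) lb
    rw [Finset.sum_pair hpq, hbs] at h
    linarith
  have A2 : l p + l q + ∑ m ∈ (({p, q} : Finset (Fin n))ᶜ), l m = 0 := by
    have h := Finset.sum_add_sum_compl ({p, q} : Finset (Fin n)) l
    rw [Finset.sum_pair hpq, hs] at h
    linarith
  have A3 : ∑ m ∈ (({p, q} : Finset (Fin n))ᶜ), lb m
      = ε * ∑ m ∈ (({p, q} : Finset (Fin n))ᶜ), l m := by
    rw [Finset.mul_sum]
    exact Finset.sum_congr rfl fun m hm => haff m (hmem m hm).1 (hmem m hm).2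
  have hsum : lb p + lb q = ε * (l p + l q) := by linear_combination A1 - ε * A2 - A3
  -- squares
  have B1 : (lb p)^2 + (lb q)^2 + ∑ m ∈ (({p, q} : Finset (Fin n))ᶜ), (lb m)^2
      = ((n : ℝ) - 1) / n := by
    have h := Finset.sum_add_sum_compl ({p, q} : Finset (Fin n)) (fun i => (lb i)^2)
    rw [Finset.sum_pair hpq, hbn2] at h
    linarith
  have B2 : (l p)^2 + (l q)^2 + ∑ m ∈ (({p, q} : Finset (Fin n))ᶜ), (l m)^2
      = ((n : ℝ) - 1) / n := by
    have h := Finset.sum_add_sum_compl ({p, q} : Finset (Fin n)) (fun i => (l i)^2)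
    rw [Finset.sum_pair hpq, hn2] at h
    linarith
  have B3 : ∑ m ∈ (({p, q} : Finset (Fin n))ᶜ), (lb m)^2
      = ∑ m ∈ (({p, q} : Finset (Fin n))ᶜ), (l m)^2 := by
    apply Finset.sum_congr rfl
    intro m hm
    rw [haff m (hmem m hm).1 (hmem m hm).2, mul_pow, hε2, one_mul]
  have hsq : (lb p)^2 + (lb q)^2 = (l p)^2 + (l q)^2 := by linarith
  have hprod : lb p * lb q = l p * l q := by
    have he := heq p q hpq
    linear_combination -he - (1/((n:ℝ)-2)) * hsq
  have hroot : (lb p - ε * l p) * (lb p - ε * l q) = 0 := by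
    linear_combination lb p * hsum - hprod + (l p * l q) * hε2
  rcases mul_eq_zero.mp hroot with h1 | h2
  · have hp' : lb p = ε * l p := by linarith
    have hq' : lb q = ε * l q := by linear_combination hsum - hp'
    rcases hε with rfl | rfl
    · left
      intro i
      rcases eq_or_ne i p with rfl | hip
      · rw [hp']; ring
      rcases eq_or_ne i q with rfl | hiq
      · rw [hq']; ring
      · rw [haff i hip hiq]; ring
    · right
      intro i
      rcases eq_or_ne i p with rfl | hip
      · rw [hp']; ring
      rcases eq_or_ne i q with rfl | hiq
      · rw [hq']; ring
      · rw [haff i hip hiq]; ring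
  · exfalso
    have hp' : lb p = ε * l q := by linarith
    apply bigFiber hn l hmult p q (-(1/((n:ℝ)-2)) * (l p + l q))
    intro m hmp hmq
    have he := heq p m (Ne.symm hmp)
    rw [haff m hmp hmq, hp'] at he
    have key : (l p - l q) * (l m + (1/((n:ℝ)-2)) * (l p + l q)) = 0 := by
      linear_combination he + (l q * l m + (1/((n:ℝ)-2)) * (l q)^2 + (1/((n:ℝ)-2)) * (l m)^2) * hε2
    rcases mul_eq_zero.mp key with h | h
    · exact absurd (by linarith : l p = l q) hlpq
    · linarith

-- tail: from affine data with a^2 = 1 and a*b*(1+2c) = 0, conclude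
lemma tailLem {n : ℕ} (hn : 5 ≤ n) (l lb : Fin n → ℝ)
    (heq : ∀ i j : Fin n, i ≠ j →
      l i * l j + (1 / ((n : ℝ) - 2)) * ((l i) ^ 2 + (l j) ^ 2)
        = lb i * lb j + (1 / ((n : ℝ) - 2)) * ((lb i) ^ 2 + (lb j) ^ 2))
    (hs : ∑ i, l i = 0) (hbs : ∑ i, lb i = 0)
    (hn2 : ∑ i, (l i) ^ 2 = ((n : ℝ) - 1) / n)
    (hbn2 : ∑ i, (lb i) ^ 2 = ((n : ℝ) - 1) / n)
    (hmult : ∀ i : Fin n, Set.ncard {j : Fin n | l j = l i} < n - 2)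
    (p q : Fin n) (hpq : p ≠ q) (hlpq : l p ≠ l q)
    (a b : ℝ) (ha0 : a ≠ 0)
    (haff : ∀ m : Fin n, m ≠ p → m ≠ q → lb m = a * l m + b)
    (hA : a^2 - 1 = 0) (hB : a*b*(1 + 2*(1/((n:ℝ)-2))) = 0) :
    (∀ i, lb i = l i) ∨ (∀ i, lb i = - l i) := by
  have h5 : (5:ℝ) ≤ (n:ℝ) := by exact_mod_cast hn
  have hcpos : 0 < 1/((n:ℝ)-2) := by
    apply div_pos one_pos; linarith
  have h12c : (1:ℝ) + 2*(1/((n:ℝ)-2)) ≠ 0 := by positivity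
  have hb : b = 0 := by
    rcases mul_eq_zero.mp hB with h | h
    · rcases mul_eq_zero.mp h with h' | h'
      · exact absurd h' ha0
      · exact h'
    · exact absurd h h12c
  have ha : a = 1 ∨ a = -1 := by
    have h : (a - 1) * (a + 1) = 0 := by linear_combination hA
    rcases mul_eq_zero.mp h with h' | h'
    · left; linarith
    · right; linarith
  exact extendLem hn l lb heq hs hbs hn2 hbn2 hmult p q hpq hlpq a ha
    (fun m hmp hmq => by rw [haff m hmp hmq, hb]; ring)

lemma tripleLem {n : ℕ} (hn : 5 ≤ n) (l lb : Fin n → ℝ)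
    (heq : ∀ i j : Fin n, i ≠ j →
      l i * l j + (1 / ((n : ℝ) - 2)) * ((l i) ^ 2 + (l j) ^ 2)
        = lb i * lb j + (1 / ((n : ℝ) - 2)) * ((lb i) ^ 2 + (lb j) ^ 2))
    (hs : ∑ i, l i = 0) (hbs : ∑ i, lb i = 0)
    (hn2 : ∑ i, (l i) ^ 2 = ((n : ℝ) - 1) / n)
    (hbn2 : ∑ i, (lb i) ^ 2 = ((n : ℝ) - 1) / n)
    (hmult : ∀ i : Fin n, Set.ncard {j : Fin n | l j = l i} < n - 2)
    (p q u v w : Fin n) (hpq : p ≠ q) (hlpq : l p ≠ l q)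
    (hup : u ≠ p) (huq : u ≠ q) (hvp : v ≠ p) (hvq : v ≠ q) (hwp : w ≠ p) (hwq : w ≠ q)
    (huv : u ≠ v) (hwu : w ≠ u) (hwv : w ≠ v)
    (hluv : l u ≠ l v) (hluw : l u ≠ l w) (hlvw : l v ≠ l w) :
    (∀ i, lb i = l i) ∨ (∀ i, lb i = - l i) := by
  obtain ⟨a, b, ha0, haff⟩ := affineLem hn l lb heq hmult p q hpq hlpq
  have Z1 := Zlem hn l lb heq a b p q haff u w v hup huq hwp hwq hvp hvq
    (Ne.symm huv) (Ne.symm hwv) hluw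
  have Z2 := Zlem hn l lb heq a b p q haff v w u hvp hvq hwp hwq hup huq
    huv (Ne.symm hwu) hlvw
  have key : (a^2 - 1) * ((1 - (1/((n:ℝ)-2))) * (l v - l u)) = 0 := by
    linear_combination Z1 - Z2
  have h5 : (5:ℝ) ≤ (n:ℝ) := by exact_mod_cast hn
  have hcne : (1:ℝ) - 1/((n:ℝ)-2) ≠ 0 := by
    have h3 : (3:ℝ) ≤ (n:ℝ) - 2 := by linarith
    have h1 : 1/((n:ℝ)-2) ≤ 1/3 := one_div_le_one_div_of_le (by norm_num) h3
    intro h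
    linarith
  have hA : a^2 - 1 = 0 := by
    rcases mul_eq_zero.mp key with h | h
    · exact h
    · exfalso
      rcases mul_eq_zero.mp h with h' | h'
      · exact hcne h'
      · exact hluv (by linarith)
  have hB : a*b*(1 + 2*(1/((n:ℝ)-2))) = 0 := by
    linear_combination Z1 - (l v + (1/((n:ℝ)-2)) * (l u + l w)) * hA
  exact tailLem hn l lb heq hs hbs hn2 hbn2 hmult p q hpq hlpq a b ha0 haff hA hB

lemma pairLem {n : ℕ} (hn : 5 ≤ n) (l lb : Fin n → ℝ)
    (heq : ∀ i j : Fin n, i ≠ j →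
      l i * l j + (1 / ((n : ℝ) - 2)) * ((l i) ^ 2 + (l j) ^ 2)
        = lb i * lb j + (1 / ((n : ℝ) - 2)) * ((lb i) ^ 2 + (lb j) ^ 2))
    (hs : ∑ i, l i = 0) (hbs : ∑ i, lb i = 0)
    (hn2 : ∑ i, (l i) ^ 2 = ((n : ℝ) - 1) / n)
    (hbn2 : ∑ i, (lb i) ^ 2 = ((n : ℝ) - 1) / n)
    (hmult : ∀ i : Fin n, Set.ncard {j : Fin n | l j = l i} < n - 2)
    (p q u v w w' : Fin n) (hpq : p ≠ q) (hlpq : l p ≠ l q)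
    (hup : u ≠ p) (huq : u ≠ q) (hvp : v ≠ p) (hvq : v ≠ q)
    (hwp : w ≠ p) (hwq : w ≠ q) (hw'p : w' ≠ p) (hw'q : w' ≠ q)
    (hwu : w ≠ u) (hwv : w ≠ v) (hw'u : w' ≠ u) (hw'v : w' ≠ v)
    (hluv : l u ≠ l v) (hlww' : l w ≠ l w') :
    (∀ i, lb i = l i) ∨ (∀ i, lb i = - l i) := by
  obtain ⟨a, b, ha0, haff⟩ := affineLem hn l lb heq hmult p q hpq hlpq
  have Z1 := Zlem hn l lb heq a b p q haff u v w hup huq hvp hvq hwp hwq hwu hwv hluv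
  have Z2 := Zlem hn l lb heq a b p q haff u v w' hup huq hvp hvq hw'p hw'q hw'u hw'v hluv
  have key : (a^2 - 1) * (l w - l w') = 0 := by
    linear_combination Z1 - Z2
  have hA : a^2 - 1 = 0 := by
    rcases mul_eq_zero.mp key with h | h
    · exact h
    · exact absurd (by linarith : l w = l w') hlww'
  have hB : a*b*(1 + 2*(1/((n:ℝ)-2))) = 0 := by
    linear_combination Z1 - (l w + (1/((n:ℝ)-2)) * (l u + l v)) * hA
  exact tailLem hn l lb heq hs hbs hn2 hbn2 hmult p q hpq hlpq a b ha0 haff hA hB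

/-- Proposition 7.2 (algebraic core): let `n ≥ 5` and `λ, λ̄ : Fin n → ℝ`
satisfy the Gauss-equation identities
`λ_i λ_j + (λ_i² + λ_j²)/(n−2) = λ̄_i λ̄_j + (λ̄_i² + λ̄_j²)/(n−2)` for `i ≠ j`,
the normalizations `Σ λ_i = Σ λ̄_i = 0`, `Σ λ_i² = Σ λ̄_i² = (n−1)/n`, and
suppose no value among the `λ_i` has multiplicity `≥ n−2`.
Then `λ̄ = λ` or `λ̄ = −λ`. -/
theorem stmt4 (n : ℕ) (hn : 5 ≤ n) (l lb : Fin n → ℝ)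
    (heq : ∀ i j : Fin n, i ≠ j →
      l i * l j + (1 / ((n : ℝ) - 2)) * ((l i) ^ 2 + (l j) ^ 2)
        = lb i * lb j + (1 / ((n : ℝ) - 2)) * ((lb i) ^ 2 + (lb j) ^ 2))
    (hs : ∑ i, l i = 0) (hbs : ∑ i, lb i = 0)
    (hn2 : ∑ i, (l i) ^ 2 = ((n : ℝ) - 1) / n)
    (hbn2 : ∑ i, (lb i) ^ 2 = ((n : ℝ) - 1) / n)
    (hmult : ∀ i : Fin n, Set.ncard {j : Fin n | l j = l i} < n - 2) :
    (∀ i, lb i = l i) ∨ (∀ i, lb i = - l i) := by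
  classical
  -- a pair with distinct values
  have hex : ∃ p q : Fin n, p ≠ q ∧ l p ≠ l q := by
    by_contra hcon
    push_neg at hcon
    have h0 : 0 < n := by omega
    have h1 : 1 < n := by omega
    apply bigFiber hn l hmult ⟨0, h0⟩ ⟨1, h1⟩ (l ⟨0, h0⟩)
    intro m hm0 _
    exact (hcon ⟨0, h0⟩ m (Ne.symm hm0)).symm
  obtain ⟨p, q, hpq, hlpq⟩ := hex
  -- a pair outside {p,q} with distinct values
  have hexuv : ∃ u v : Fin n, u ≠ p ∧ u ≠ q ∧ v ≠ p ∧ v ≠ q ∧ u ≠ v ∧ l u ≠ l v := by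
    by_contra hcon
    push_neg at hcon
    obtain ⟨u0, hu0⟩ := exOut ({p, q} : Finset (Fin n)) (by
      have : ({p, q} : Finset (Fin n)).card ≤ 2 :=
        (Finset.card_insert_le _ _).trans (by simp)
      omega)
    simp only [Finset.mem_insert, Finset.mem_singleton] at hu0
    push_neg at hu0
    apply bigFiber hn l hmult p q (l u0)
    intro m hmp hmq
    rcases eq_or_ne m u0 with rfl | hmu
    · rfl
    · exact hcon m u0 hmp hmq hu0.1 hu0.2 hmu
  obtain ⟨u, v, hup, huq, hvp, hvq, huv, hluv⟩ := hexuv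
  by_cases hconst : ∀ w w' : Fin n, w ≠ p → w ≠ q → w ≠ u → w ≠ v →
      w' ≠ p → w' ≠ q → w' ≠ u → w' ≠ v → l w = l w'
  · -- everything outside {p,q,u,v} has the same value
    obtain ⟨w0, hw0⟩ := exOut ({p, q, u, v} : Finset (Fin n)) (by
      have : ({p, q, u, v} : Finset (Fin n)).card ≤ 4 := by
        apply (Finset.card_insert_le _ _).trans
        have : ({q, u, v} : Finset (Fin n)).card ≤ 3 := by
          apply (Finset.card_insert_le _ _).trans
          have : ({u, v} : Finset (Fin n)).card ≤ 2 :=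
            (Finset.card_insert_le _ _).trans (by simp)
          omega
        omega
      omega)
    simp only [Finset.mem_insert, Finset.mem_singleton] at hw0
    push_neg at hw0
    obtain ⟨hw0p, hw0q, hw0u, hw0v⟩ := hw0
    by_cases hKp : l w0 = l p
    · by_cases hKu : l w0 = l u
      · exfalso
        apply bigFiber hn l hmult v q (l w0)
        intro m hmv hmq
        rcases eq_or_ne m p with rfl | hmp
        · exact hKp.symm
        rcases eq_or_ne m u with rfl | hmu
        · exact hKu.symm
        rcases eq_or_ne m w0 with rfl | hmw
        · rfl
        · exact hconst m w0 hmp hmq hmu hmv hw0p hw0q hw0u hw0v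
      · by_cases hKv : l w0 = l v
        · exfalso
          apply bigFiber hn l hmult u q (l w0)
          intro m hmu hmq
          rcases eq_or_ne m p with rfl | hmp
          · exact hKp.symm
          rcases eq_or_ne m v with rfl | hmv
          · exact hKv.symm
          rcases eq_or_ne m w0 with rfl | hmw
          · rfl
          · exact hconst m w0 hmp hmq hmu hmv hw0p hw0q hw0u hw0v
        · exact tripleLem hn l lb heq hs hbs hn2 hbn2 hmult p q u v w0 hpq hlpq
            hup huq hvp hvq hw0p hw0q huv hw0u hw0v hluv
            (fun h => hKu h.symm) (fun h => hKv h.symm)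
    · by_cases hKq : l w0 = l q
      · by_cases hKu : l w0 = l u
        · exfalso
          apply bigFiber hn l hmult v p (l w0)
          intro m hmv hmp
          rcases eq_or_ne m q with rfl | hmq
          · exact hKq.symm
          rcases eq_or_ne m u with rfl | hmu
          · exact hKu.symm
          rcases eq_or_ne m w0 with rfl | hmw
          · rfl
          · exact hconst m w0 hmp hmq hmu hmv hw0p hw0q hw0u hw0v
        · by_cases hKv : l w0 = l v
          · exfalso
            apply bigFiber hn l hmult u p (l w0)
            intro m hmu hmp
            rcases eq_or_ne m q with rfl | hmq
            · exact hKq.symm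
            rcases eq_or_ne m v with rfl | hmv
            · exact hKv.symm
            rcases eq_or_ne m w0 with rfl | hmw
            · rfl
            · exact hconst m w0 hmp hmq hmu hmv hw0p hw0q hw0u hw0v
          · exact tripleLem hn l lb heq hs hbs hn2 hbn2 hmult p q u v w0 hpq hlpq
              hup huq hvp hvq hw0p hw0q huv hw0u hw0v hluv
              (fun h => hKu h.symm) (fun h => hKv h.symm)
      · -- l w0 differs from l p and l q : use triple (p,q,w0) with base pair (u,v)
        exact tripleLem hn l lb heq hs hbs hn2 hbn2 hmult u v p q w0 huv hluv
          (Ne.symm hup) (Ne.symm hvp) (Ne.symm huq) (Ne.symm hvq) hw0u hw0v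
          hpq hw0p hw0q hlpq (fun h => hKp h.symm) (fun h => hKq h.symm)
  · push_neg at hconst
    obtain ⟨w, w', hwp, hwq, hwu, hwv, hw'p, hw'q, hw'u, hw'v, hlww'⟩ := hconst
    exact pairLem hn l lb heq hs hbs hn2 hbn2 hmult p q u v w w' hpq hlpq
      hup huq hvp hvq hwp hwq hw'p hw'q hwu hwv hw'u hw'v hluv hlww'
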